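/- arXiv:1912.13225 — 2 statements merged into one kernel-verified Lean document; each statement's English description precedes it below -/
import Mathlib

section
/- (Stable decomposition bound for GenEO-2 with inexact coarse solve) Assume: ∑_{i=1}^N R_iᵀ D_i R_i = I; ‖∑_{i=1}^N R_iᵀ V_i‖_A² ≤ k₀ ∑_{i=1}^N ‖R_iᵀ V_i‖_A² for all V_i; for each j = 1,…,N, B_j is a symmetric positive definite n_j×n_j matrix and p_j : ℝ^{n_j} → ℝ^{n_j} is a linear map such that ‖R_jᵀ D_j (I − p_j) v‖_A² ≤ γ ⟨B_j (I − p_j) v, (I − p_j) v⟩ for all v ∈ ℝ^{n_j}; and ∑_{j=1}^N ⟨B_j (I − p_j) R_j U, (I − p_j) R_j U⟩ ≤ (k₁/τ) ⟨A U, U⟩ for all U ∈ ℝⁿ. Let ε_A := ‖P₀ − P̃₀‖_A and define F U := P₀ U + (P̃₀ − P₀) ∑_{j=1}^N R_jᵀ D_j (I − p_j) R_j U. Then for all U ∈ ℝⁿ: ⟨A (F U), F U⟩ ≤ (1 + ε_A √(k₀ k₁ γ / τ))² ⟨A U, U⟩. -/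
open Matrix

/-- The norm induced by an SPD matrix `A`: `‖x‖_A = √(⟨A x, x⟩)`. -/
noncomputable def aNorm {n : ℕ} (A : Matrix (Fin n) (Fin n) ℝ) (x : Fin n → ℝ) : ℝ :=
  Real.sqrt ((A *ᵥ x) ⬝ᵥ x)

/-- The operator norm of a matrix `M` induced by the `A`-norm. -/
noncomputable def aOpNorm {n : ℕ} (A M : Matrix (Fin n) (Fin n) ℝ) : ℝ :=
  sSup { t : ℝ | ∃ x : Fin n → ℝ, x ≠ 0 ∧ t = aNorm A (M *ᵥ x) / aNorm A x }

section Helpers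

variable {n : ℕ} {A : Matrix (Fin n) (Fin n) ℝ}

lemma posdef_transpose (hA : A.PosDef) : Aᵀ = A := by
  have h := hA.1.eq
  rwa [conjTranspose_eq_transpose_of_trivial] at h

lemma symm_dot (hAt : Aᵀ = A) (x y : Fin n → ℝ) :
    (A *ᵥ x) ⬝ᵥ y = (A *ᵥ y) ⬝ᵥ x := by
  conv_lhs => rw [dotProduct_comm, Matrix.dotProduct_mulVec, ← hAt, Matrix.vecMul_transpose]

lemma posdef_dot (hA : A.PosDef) {x : Fin n → ℝ} (hx : x ≠ 0) :
    0 < (A *ᵥ x) ⬝ᵥ x := by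
  have h := hA.dotProduct_mulVec_pos hx
  simpa [dotProduct_comm] using h

lemma nonneg_dot (hA : A.PosDef) (x : Fin n → ℝ) : 0 ≤ (A *ᵥ x) ⬝ᵥ x := by
  by_cases hx : x = 0
  · simp [hx]
  · exact (posdef_dot hA hx).le

lemma cs_dot (hA : A.PosDef) (x y : Fin n → ℝ) :
    ((A *ᵥ x) ⬝ᵥ y) ^ 2 ≤ ((A *ᵥ x) ⬝ᵥ x) * ((A *ᵥ y) ⬝ᵥ y) := by
  by_cases hy : y = 0
  · simp [hy]
  · have hqy : 0 < (A *ᵥ y) ⬝ᵥ y := posdef_dot hA hy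
    set c := (A *ᵥ x) ⬝ᵥ y with hc
    set t := -c / ((A *ᵥ y) ⬝ᵥ y) with ht
    have h0 : 0 ≤ (A *ᵥ (x + t • y)) ⬝ᵥ (x + t • y) := nonneg_dot hA _
    have hexp : (A *ᵥ (x + t • y)) ⬝ᵥ (x + t • y)
        = (A *ᵥ x) ⬝ᵥ x + 2 * t * c + t ^ 2 * ((A *ᵥ y) ⬝ᵥ y) := by
      rw [Matrix.mulVec_add, Matrix.mulVec_smul, add_dotProduct, smul_dotProduct,
        dotProduct_add, dotProduct_add, dotProduct_smul, dotProduct_smul,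
        symm_dot (posdef_transpose hA) y x, ← hc]
      simp only [smul_eq_mul]
      ring
    rw [hexp, ht] at h0
    have heq : (A *ᵥ x) ⬝ᵥ x + 2 * (-c / ((A *ᵥ y) ⬝ᵥ y)) * c
        + (-c / ((A *ᵥ y) ⬝ᵥ y)) ^ 2 * ((A *ᵥ y) ⬝ᵥ y)
        = (A *ᵥ x) ⬝ᵥ x - c ^ 2 / ((A *ᵥ y) ⬝ᵥ y) := by
      field_simp
      ring
    rw [heq] at h0
    have h3 : c ^ 2 / ((A *ᵥ y) ⬝ᵥ y) ≤ (A *ᵥ x) ⬝ᵥ x := by linarith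
    have h4 := (div_le_iff₀ hqy).mp h3
    linarith

lemma aNorm_nonneg' (x : Fin n → ℝ) : 0 ≤ aNorm A x := Real.sqrt_nonneg _

lemma sq_aNorm (hA : A.PosDef) (x : Fin n → ℝ) :
    aNorm A x ^ 2 = (A *ᵥ x) ⬝ᵥ x :=
  Real.sq_sqrt (nonneg_dot hA x)

lemma aNorm_neg (x : Fin n → ℝ) : aNorm A (-x) = aNorm A x := by
  unfold aNorm
  simp [Matrix.mulVec_neg]

lemma dot_le_aNorm_mul (hA : A.PosDef) (x y : Fin n → ℝ) :
    (A *ᵥ x) ⬝ᵥ y ≤ aNorm A x * aNorm A y := by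
  have hcs := cs_dot hA x y
  have hx := aNorm_nonneg' (A := A) x
  have hy := aNorm_nonneg' (A := A) y
  have hx2 := sq_aNorm hA x
  have hy2 := sq_aNorm hA y
  nlinarith [hcs, mul_nonneg hx hy]

lemma aNorm_triangle (hA : A.PosDef) (x y : Fin n → ℝ) :
    aNorm A (x + y) ≤ aNorm A x + aNorm A y := by
  have key : (A *ᵥ (x + y)) ⬝ᵥ (x + y) ≤ (aNorm A x + aNorm A y) ^ 2 := by
    have hexp : (A *ᵥ (x + y)) ⬝ᵥ (x + y)
        = (A *ᵥ x) ⬝ᵥ x + 2 * ((A *ᵥ x) ⬝ᵥ y) + (A *ᵥ y) ⬝ᵥ y := by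
      rw [Matrix.mulVec_add, add_dotProduct, dotProduct_add, dotProduct_add,
        symm_dot (posdef_transpose hA) y x]
      ring
    have h1 := dot_le_aNorm_mul hA x y
    have hx2 := sq_aNorm hA x
    have hy2 := sq_aNorm hA y
    nlinarith [hexp, h1]
  calc aNorm A (x + y) = Real.sqrt ((A *ᵥ (x + y)) ⬝ᵥ (x + y)) := rfl
    _ ≤ Real.sqrt ((aNorm A x + aNorm A y) ^ 2) := Real.sqrt_le_sqrt key
    _ = aNorm A x + aNorm A y :=
        Real.sqrt_sq (add_nonneg (aNorm_nonneg' x) (aNorm_nonneg' y))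

end Helpers

section OpNorm

variable {n : ℕ} {A : Matrix (Fin n) (Fin n) ℝ}

lemma mulVec_euclid_bound (B : Matrix (Fin n) (Fin n) ℝ) (y : Fin n → ℝ) :
    (B *ᵥ y) ⬝ᵥ (B *ᵥ y) ≤ (∑ i, ∑ j, (B i j) ^ 2) * (y ⬝ᵥ y) := by
  have hrow : ∀ i : Fin n, (B *ᵥ y) i * (B *ᵥ y) i ≤ (∑ j, (B i j) ^ 2) * (y ⬝ᵥ y) := by
    intro i
    have h := Finset.sum_mul_sq_le_sq_mul_sq Finset.univ (fun j => B i j) (fun j => y j)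
    have h1 : (B *ᵥ y) i = ∑ j, B i j * y j := by
      simp [Matrix.mulVec, dotProduct]
    have h2 : y ⬝ᵥ y = ∑ j, (y j) ^ 2 := by
      simp [dotProduct, pow_two]
    rw [h1, h2, ← pow_two]
    exact h
  calc (B *ᵥ y) ⬝ᵥ (B *ᵥ y) = ∑ i, (B *ᵥ y) i * (B *ᵥ y) i := by simp [dotProduct]
    _ ≤ ∑ i, (∑ j, (B i j) ^ 2) * (y ⬝ᵥ y) := Finset.sum_le_sum (fun i _ => hrow i)
    _ = (∑ i, ∑ j, (B i j) ^ 2) * (y ⬝ᵥ y) := by rw [Finset.sum_mul]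

open scoped MatrixOrder in
lemma aOpNorm_bddAbove (hA : A.PosDef) (M : Matrix (Fin n) (Fin n) ℝ) :
    BddAbove { t : ℝ | ∃ x : Fin n → ℝ, x ≠ 0 ∧ t = aNorm A (M *ᵥ x) / aNorm A x } := by
  set S := CFC.sqrt A with hSdef
  have hSS : S * S = A := CFC.sqrt_mul_sqrt_self A hA.posSemidef.nonneg
  have hSh : Sᵀ = S := by
    have h := (CFC.sqrt_nonneg A).posSemidef.1.eq
    rwa [conjTranspose_eq_transpose_of_trivial] at h
  have hAdet : IsUnit A.det := (Matrix.isUnit_iff_isUnit_det A).mp hA.isUnit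
  have hSdet : IsUnit S.det := by
    rw [isUnit_iff_ne_zero] at hAdet ⊢
    intro h
    apply hAdet
    rw [← hSS, det_mul, h, mul_zero]
  have hSinv : S * M * S⁻¹ * S = S * M := by
    rw [Matrix.mul_assoc, Matrix.nonsing_inv_mul S hSdet, Matrix.mul_one]
  have hq : ∀ z : Fin n → ℝ, (A *ᵥ z) ⬝ᵥ z = (S *ᵥ z) ⬝ᵥ (S *ᵥ z) := by
    intro z
    rw [← hSS, ← Matrix.mulVec_mulVec, symm_dot hSh (S *ᵥ z) z]
  set C := ∑ i, ∑ j, ((S * M * S⁻¹) i j) ^ 2 with hC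
  have hC0 : 0 ≤ C := Finset.sum_nonneg fun i _ => Finset.sum_nonneg fun j _ => sq_nonneg _
  refine ⟨Real.sqrt C, ?_⟩
  rintro t ⟨x, hx, rfl⟩
  have hxpos : 0 < aNorm A x := Real.sqrt_pos.mpr (posdef_dot hA hx)
  rw [div_le_iff₀ hxpos]
  have hkey : (A *ᵥ (M *ᵥ x)) ⬝ᵥ (M *ᵥ x) ≤ C * ((A *ᵥ x) ⬝ᵥ x) := by
    rw [hq (M *ᵥ x), hq x]
    have h1 : S *ᵥ (M *ᵥ x) = (S * M * S⁻¹) *ᵥ (S *ᵥ x) := by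
      rw [Matrix.mulVec_mulVec, Matrix.mulVec_mulVec, hSinv]
    rw [h1]
    exact mulVec_euclid_bound (S * M * S⁻¹) (S *ᵥ x)
  calc aNorm A (M *ᵥ x) = Real.sqrt ((A *ᵥ (M *ᵥ x)) ⬝ᵥ (M *ᵥ x)) := rfl
    _ ≤ Real.sqrt (C * ((A *ᵥ x) ⬝ᵥ x)) := Real.sqrt_le_sqrt hkey
    _ = Real.sqrt C * aNorm A x := Real.sqrt_mul hC0 _

lemma aOpNorm_nonneg (A M : Matrix (Fin n) (Fin n) ℝ) : 0 ≤ aOpNorm A M := by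
  apply Real.sSup_nonneg
  rintro t ⟨x, hx, rfl⟩
  exact div_nonneg (aNorm_nonneg' _) (aNorm_nonneg' _)

lemma aNorm_mulVec_le (hA : A.PosDef) (M : Matrix (Fin n) (Fin n) ℝ) (x : Fin n → ℝ) :
    aNorm A (M *ᵥ x) ≤ aOpNorm A M * aNorm A x := by
  by_cases hx : x = 0
  · subst hx
    have h0 : aNorm A (0 : Fin n → ℝ) = 0 := by
      unfold aNorm; simp
    simp only [Matrix.mulVec_zero, h0, mul_zero, le_refl]
  · have hxpos : 0 < aNorm A x := Real.sqrt_pos.mpr (posdef_dot hA hx)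
    have hle : aNorm A (M *ᵥ x) / aNorm A x ≤ aOpNorm A M :=
      le_csSup (aOpNorm_bddAbove hA M) ⟨x, hx, rfl⟩
    calc aNorm A (M *ᵥ x) = aNorm A (M *ᵥ x) / aNorm A x * aNorm A x := by
          field_simp
      _ ≤ aOpNorm A M * aNorm A x := mul_le_mul_of_nonneg_right hle hxpos.le

end OpNorm

lemma coarse_proj_le {n m : ℕ} {A : Matrix (Fin n) (Fin n) ℝ} (hA : A.PosDef)
    (Z : Matrix (Fin n) (Fin m) ℝ) (hZ : LinearIndependent ℝ Zᵀ) (U : Fin n → ℝ) :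
    aNorm A ((Z * (Zᵀ * A * Z)⁻¹ * Zᵀ * A) *ᵥ U) ≤ aNorm A U := by
  have hAt : Aᵀ = A := posdef_transpose hA
  set E := Zᵀ * A * Z with hEdef
  have hZinj : Function.Injective Z.mulVec := by
    have h := Matrix.vecMul_injective_iff (R := ℝ) (M := Zᵀ) |>.mpr hZ
    intro a b hab
    apply h
    show a ᵥ* Zᵀ = b ᵥ* Zᵀ
    rw [Matrix.vecMul_transpose, Matrix.vecMul_transpose]
    exact hab
  have hEt : Eᵀ = E := by
    rw [hEdef, transpose_mul, transpose_mul, transpose_transpose, hAt, Matrix.mul_assoc]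
  have hE : E.PosDef := by
    refine Matrix.PosDef.of_dotProduct_mulVec_pos ?_ ?_
    · show Eᴴ = E
      rw [conjTranspose_eq_transpose_of_trivial]
      exact hEt
    · intro x hx
      have hZx : Z *ᵥ x ≠ 0 := by
        intro h
        exact hx (hZinj (by rw [h, Matrix.mulVec_zero]))
      have h := hA.dotProduct_mulVec_pos hZx
      have heq : star x ⬝ᵥ (E *ᵥ x) = star (Z *ᵥ x) ⬝ᵥ (A *ᵥ (Z *ᵥ x)) := by
        rw [hEdef, ← Matrix.mulVec_mulVec, ← Matrix.mulVec_mulVec]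
        simp only [star_trivial]
        rw [Matrix.dotProduct_mulVec x Zᵀ, Matrix.vecMul_transpose]
      rw [heq]
      exact h
  have hEdet : IsUnit E.det := (Matrix.isUnit_iff_isUnit_det E).mp hE.isUnit
  have hEit : (E⁻¹)ᵀ = E⁻¹ := by rw [Matrix.transpose_nonsing_inv, hEt]
  set P := Z * E⁻¹ * Zᵀ * A with hPdef
  have h1 : E⁻¹ * E = 1 := Matrix.nonsing_inv_mul E hEdet
  have hPZ : P * Z = Z * (E⁻¹ * E) := by
    simp only [hPdef, hEdef, Matrix.mul_assoc]
  have hPP : P * P = P := by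
    calc P * P = P * Z * (E⁻¹ * (Zᵀ * A)) := by
          simp only [hPdef, Matrix.mul_assoc]
      _ = Z * (E⁻¹ * E) * (E⁻¹ * (Zᵀ * A)) := by rw [hPZ]
      _ = Z * (E⁻¹ * (Zᵀ * A)) := by rw [h1, Matrix.mul_one]
      _ = P := by simp only [hPdef, Matrix.mul_assoc]
  have hPt : Pᵀ = A * (Z * (E⁻¹ * Zᵀ)) := by
    simp only [hPdef, transpose_mul, hAt, hEit, transpose_transpose, Matrix.mul_assoc]
  have hQ : Pᵀ * (A * P) = A * P := by
    rw [hPt]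
    calc A * (Z * (E⁻¹ * Zᵀ)) * (A * P) = A * (P * P) := by
          simp only [hPdef, Matrix.mul_assoc]
      _ = A * P := by rw [hPP]
  -- cross term vanishes
  have horth : (A *ᵥ (P *ᵥ U)) ⬝ᵥ (U - P *ᵥ U) = 0 := by
    rw [Matrix.mulVec_mulVec, dotProduct_sub]
    have h2 : ((A * P) *ᵥ U) ⬝ᵥ (P *ᵥ U) = ((A * P) *ᵥ U) ⬝ᵥ U := by
      rw [Matrix.dotProduct_mulVec, ← Matrix.mulVec_transpose, Matrix.mulVec_mulVec, hQ]
    rw [h2, sub_self]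
  -- Pythagoras
  have hexp : (A *ᵥ U) ⬝ᵥ U = (A *ᵥ (P *ᵥ U)) ⬝ᵥ (P *ᵥ U)
      + 2 * ((A *ᵥ (P *ᵥ U)) ⬝ᵥ (U - P *ᵥ U))
      + (A *ᵥ (U - P *ᵥ U)) ⬝ᵥ (U - P *ᵥ U) := by
    have hU : U = P *ᵥ U + (U - P *ᵥ U) := by ring
    conv_lhs => rw [hU]
    rw [Matrix.mulVec_add, add_dotProduct, dotProduct_add, dotProduct_add,
      symm_dot hAt (U - P *ᵥ U) (P *ᵥ U)]
    ring
  have hle : (A *ᵥ (P *ᵥ U)) ⬝ᵥ (P *ᵥ U) ≤ (A *ᵥ U) ⬝ᵥ U := by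
    have h3 := nonneg_dot hA (U - P *ᵥ U)
    rw [hexp, horth]
    linarith
  exact Real.sqrt_le_sqrt hle

/-- Stable decomposition bound for GenEO-2 with inexact coarse solve:
with partition of unity, the `k₀`-bound, local bounds
`‖R_jᵀ D_j (I − p_j) v‖_A² ≤ γ ⟨B_j (I − p_j) v, (I − p_j) v⟩` and the GenEO-2 bound
`∑_j ⟨B_j (I − p_j) R_j U, (I − p_j) R_j U⟩ ≤ (k₁/τ) ⟨A U, U⟩`, setting
`F U := P₀ U + (P̃₀ − P₀) ∑_j R_jᵀ D_j (I − p_j) R_j U` and `ε_A := ‖P₀ − P̃₀‖_A`,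
one has `⟨A (F U), F U⟩ ≤ (1 + ε_A √(k₀ k₁ γ / τ))² ⟨A U, U⟩` for all `U`. -/
theorem stmt16 {n m N : ℕ} (A : Matrix (Fin n) (Fin n) ℝ) (hA : A.PosDef)
    (Z : Matrix (Fin n) (Fin m) ℝ) (hZ : LinearIndependent ℝ Zᵀ)
    (Et : Matrix (Fin m) (Fin m) ℝ) (hEt : Et.PosDef)
    (nd : Fin N → ℕ)
    (R : ∀ i : Fin N, Matrix (Fin (nd i)) (Fin n) ℝ)
    (D : ∀ i : Fin N, Matrix (Fin (nd i)) (Fin (nd i)) ℝ)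
    (hD : ∀ i, (D i).IsDiag)
    (k₀ k₁ τ γ : ℝ) (hk₀ : 0 < k₀) (hk₁ : 0 < k₁) (hτ : 0 < τ) (hγ : 0 < γ)
    (hPOU : ∑ i, (R i)ᵀ * D i * R i = (1 : Matrix (Fin n) (Fin n) ℝ))
    (hk₀bound : ∀ V : ∀ i : Fin N, Fin (nd i) → ℝ,
      (A *ᵥ (∑ i, (R i)ᵀ *ᵥ V i)) ⬝ᵥ (∑ i, (R i)ᵀ *ᵥ V i)
        ≤ k₀ * ∑ i, (A *ᵥ ((R i)ᵀ *ᵥ V i)) ⬝ᵥ ((R i)ᵀ *ᵥ V i))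
    (B : ∀ j : Fin N, Matrix (Fin (nd j)) (Fin (nd j)) ℝ)
    (hB : ∀ j, (B j).PosDef)
    (p : ∀ j : Fin N, Matrix (Fin (nd j)) (Fin (nd j)) ℝ)
    (hγbound : ∀ j (v : Fin (nd j) → ℝ),
      (A *ᵥ ((R j)ᵀ *ᵥ ((D j) *ᵥ ((1 - p j) *ᵥ v)))) ⬝ᵥ
          ((R j)ᵀ *ᵥ ((D j) *ᵥ ((1 - p j) *ᵥ v)))
        ≤ γ * (((B j) *ᵥ ((1 - p j) *ᵥ v)) ⬝ᵥ ((1 - p j) *ᵥ v)))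
    (hGenEO2 : ∀ U : Fin n → ℝ,
      ∑ j, ((B j) *ᵥ ((1 - p j) *ᵥ ((R j) *ᵥ U))) ⬝ᵥ ((1 - p j) *ᵥ ((R j) *ᵥ U))
        ≤ (k₁ / τ) * ((A *ᵥ U) ⬝ᵥ U))
    (εA : ℝ)
    (hεA : εA = aOpNorm A (Z * (Zᵀ * A * Z)⁻¹ * Zᵀ * A - Z * Et⁻¹ * Zᵀ * A)) :
    ∀ U : Fin n → ℝ,
      (A *ᵥ ((Z * (Zᵀ * A * Z)⁻¹ * Zᵀ * A) *ᵥ U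
            + (Z * Et⁻¹ * Zᵀ * A - Z * (Zᵀ * A * Z)⁻¹ * Zᵀ * A) *ᵥ
              (∑ j, (R j)ᵀ *ᵥ ((D j) *ᵥ ((1 - p j) *ᵥ ((R j) *ᵥ U)))))) ⬝ᵥ
          ((Z * (Zᵀ * A * Z)⁻¹ * Zᵀ * A) *ᵥ U
            + (Z * Et⁻¹ * Zᵀ * A - Z * (Zᵀ * A * Z)⁻¹ * Zᵀ * A) *ᵥ
              (∑ j, (R j)ᵀ *ᵥ ((D j) *ᵥ ((1 - p j) *ᵥ ((R j) *ᵥ U)))))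
        ≤ (1 + εA * Real.sqrt (k₀ * k₁ * γ / τ)) ^ 2 * ((A *ᵥ U) ⬝ᵥ U) := by
  intro U
  set W := ∑ j, (R j)ᵀ *ᵥ ((D j) *ᵥ ((1 - p j) *ᵥ ((R j) *ᵥ U))) with hWdef
  set P0 := Z * (Zᵀ * A * Z)⁻¹ * Zᵀ * A with hP0
  set Pt := Z * Et⁻¹ * Zᵀ * A with hPt
  have hc0 : (0:ℝ) ≤ k₀ * k₁ * γ / τ := by positivity
  have hεA0 : 0 ≤ εA := by rw [hεA]; exact aOpNorm_nonneg _ _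
  -- bound on W
  have hW2 : (A *ᵥ W) ⬝ᵥ W ≤ (k₀ * k₁ * γ / τ) * ((A *ᵥ U) ⬝ᵥ U) := by
    have h1 := hk₀bound fun j => (D j) *ᵥ ((1 - p j) *ᵥ ((R j) *ᵥ U))
    have h2 : ∑ j, (A *ᵥ ((R j)ᵀ *ᵥ ((D j) *ᵥ ((1 - p j) *ᵥ ((R j) *ᵥ U))))) ⬝ᵥ
        ((R j)ᵀ *ᵥ ((D j) *ᵥ ((1 - p j) *ᵥ ((R j) *ᵥ U))))
        ≤ ∑ j, γ * (((B j) *ᵥ ((1 - p j) *ᵥ ((R j) *ᵥ U))) ⬝ᵥ ((1 - p j) *ᵥ ((R j) *ᵥ U))) :=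
      Finset.sum_le_sum fun j _ => hγbound j ((R j) *ᵥ U)
    have h3 := hGenEO2 U
    have h4 : ∑ j, γ * (((B j) *ᵥ ((1 - p j) *ᵥ ((R j) *ᵥ U))) ⬝ᵥ ((1 - p j) *ᵥ ((R j) *ᵥ U)))
        = γ * ∑ j, (((B j) *ᵥ ((1 - p j) *ᵥ ((R j) *ᵥ U))) ⬝ᵥ ((1 - p j) *ᵥ ((R j) *ᵥ U))) :=
      (Finset.mul_sum _ _ _).symm
    have h5 : γ * ∑ j, (((B j) *ᵥ ((1 - p j) *ᵥ ((R j) *ᵥ U))) ⬝ᵥ ((1 - p j) *ᵥ ((R j) *ᵥ U)))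
        ≤ γ * (k₁ / τ * ((A *ᵥ U) ⬝ᵥ U)) := mul_le_mul_of_nonneg_left h3 hγ.le
    have h6 : (A *ᵥ W) ⬝ᵥ W ≤ k₀ * (γ * (k₁ / τ * ((A *ᵥ U) ⬝ᵥ U))) := by
      refine le_trans h1 (mul_le_mul_of_nonneg_left ?_ hk₀.le)
      calc _ ≤ _ := h2
        _ = _ := h4
        _ ≤ _ := h5
    have h7 : k₀ * (γ * (k₁ / τ * ((A *ᵥ U) ⬝ᵥ U))) = (k₀ * k₁ * γ / τ) * ((A *ᵥ U) ⬝ᵥ U) := by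
      ring
    linarith
  have hWn : aNorm A W ≤ Real.sqrt (k₀ * k₁ * γ / τ) * aNorm A U := by
    calc aNorm A W = Real.sqrt ((A *ᵥ W) ⬝ᵥ W) := rfl
      _ ≤ Real.sqrt ((k₀ * k₁ * γ / τ) * ((A *ᵥ U) ⬝ᵥ U)) := Real.sqrt_le_sqrt hW2
      _ = Real.sqrt (k₀ * k₁ * γ / τ) * aNorm A U := Real.sqrt_mul hc0 _
  -- bound on the perturbation term
  have hneg : (Pt - P0) *ᵥ W = -((P0 - Pt) *ᵥ W) := by
    rw [Matrix.sub_mulVec, Matrix.sub_mulVec, neg_sub]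
  have hMb : aNorm A ((Pt - P0) *ᵥ W) ≤ εA * aNorm A W := by
    rw [hneg, aNorm_neg, hεA]
    exact aNorm_mulVec_le hA _ W
  -- projection bound
  have hproj : aNorm A (P0 *ᵥ U) ≤ aNorm A U := coarse_proj_le hA Z hZ U
  -- combine
  have hF : aNorm A (P0 *ᵥ U + (Pt - P0) *ᵥ W)
      ≤ (1 + εA * Real.sqrt (k₀ * k₁ * γ / τ)) * aNorm A U := by
    calc aNorm A (P0 *ᵥ U + (Pt - P0) *ᵥ W)
        ≤ aNorm A (P0 *ᵥ U) + aNorm A ((Pt - P0) *ᵥ W) := aNorm_triangle hA _ _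
      _ ≤ aNorm A U + εA * aNorm A W := add_le_add hproj hMb
      _ ≤ aNorm A U + εA * (Real.sqrt (k₀ * k₁ * γ / τ) * aNorm A U) := by
          exact add_le_add_right (mul_le_mul_of_nonneg_left hWn hεA0) _
      _ = (1 + εA * Real.sqrt (k₀ * k₁ * γ / τ)) * aNorm A U := by ring
  have hsq := pow_le_pow_left₀ (aNorm_nonneg' (A := A) _) hF 2
  rw [mul_pow, sq_aNorm hA, sq_aNorm hA] at hsq
  exact hsq
end

section
/- (Annex: stable local components built on subdomains extended by one layer) Let A be a symmetric positive definite n×n real matrix. For i = 1,…,N let R_i (size n_i×n), R̃_i (size ñ_i×n) and diagonal D̃_i (size ñ_i×ñ_i) be real matrices satisfying R_iᵀ R_i R̃_iᵀ D̃_i = R̃_iᵀ D̃_i. Let A_i^Neu be symmetric positive semidefinite ñ_i×ñ_i matrices with ∑_{i=1}^N ⟨A_i^Neu R̃_i U, R̃_i U⟩ ≤ k̃₁ ⟨A U, U⟩ for all U ∈ ℝⁿ, and let π̃_i : ℝ^{ñ_i} → ℝ^{ñ_i} be linear maps such that ⟨A R̃_iᵀ D̃_i (I − π̃_i) u, R̃_iᵀ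 D̃_i (I − π̃_i) u⟩ ≤ τ ⟨A_i^Neu u, u⟩ for all u ∈ ℝ^{ñ_i}. Then, setting U_i := R_i R̃_iᵀ D̃_i (I − π̃_i) R̃_i U, one has ∑_{i=1}^N ⟨A R_iᵀ U_i, R_iᵀ U_i⟩ ≤ τ k̃₁ ⟨A U, U⟩ for all U ∈ ℝⁿ. -/
open Matrix

/-- Annex: stable local components built on subdomains extended by one
layer: if `R_iᵀ R_i R̃_iᵀ D̃_i = R̃_iᵀ D̃_i`, the Neumann matrices satisfy
`∑ ⟨A_i^Neu R̃_i U, R̃_i U⟩ ≤ k̃₁ ⟨A U, U⟩` and the local projections satisfy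
`⟨A R̃_iᵀ D̃_i (I − π̃_i) u, R̃_iᵀ D̃_i (I − π̃_i) u⟩ ≤ τ ⟨A_i^Neu u, u⟩`, then for
`U_i := R_i R̃_iᵀ D̃_i (I − π̃_i) R̃_i U` one has
`∑ ⟨A R_iᵀ U_i, R_iᵀ U_i⟩ ≤ τ k̃₁ ⟨A U, U⟩` for all `U`. -/
theorem stmt18 {n N : ℕ} (A : Matrix (Fin n) (Fin n) ℝ) (hA : A.PosDef)
    (nd ntd : Fin N → ℕ)
    (R : ∀ i : Fin N, Matrix (Fin (nd i)) (Fin n) ℝ)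
    (Rt : ∀ i : Fin N, Matrix (Fin (ntd i)) (Fin n) ℝ)
    (Dt : ∀ i : Fin N, Matrix (Fin (ntd i)) (Fin (ntd i)) ℝ)
    (hDt : ∀ i, (Dt i).IsDiag)
    (hcompat : ∀ i, (R i)ᵀ * R i * (Rt i)ᵀ * Dt i = (Rt i)ᵀ * Dt i)
    (ANeu : ∀ i : Fin N, Matrix (Fin (ntd i)) (Fin (ntd i)) ℝ)
    (hANeu : ∀ i, (ANeu i).PosSemidef)
    (k₁t τ : ℝ) (hk₁t : 0 < k₁t) (hτ : 0 < τ)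
    (hNeuSum : ∀ U : Fin n → ℝ,
      ∑ i, ((ANeu i) *ᵥ ((Rt i) *ᵥ U)) ⬝ᵥ ((Rt i) *ᵥ U) ≤ k₁t * ((A *ᵥ U) ⬝ᵥ U))
    (π : ∀ i : Fin N, Matrix (Fin (ntd i)) (Fin (ntd i)) ℝ)
    (hπ : ∀ i (u : Fin (ntd i) → ℝ),
      (A *ᵥ ((Rt i)ᵀ *ᵥ ((Dt i) *ᵥ ((1 - π i) *ᵥ u)))) ⬝ᵥ
          ((Rt i)ᵀ *ᵥ ((Dt i) *ᵥ ((1 - π i) *ᵥ u)))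
        ≤ τ * (((ANeu i) *ᵥ u) ⬝ᵥ u)) :
    ∀ U : Fin n → ℝ,
      ∑ i, (A *ᵥ ((R i)ᵀ *ᵥ ((R i) *ᵥ ((Rt i)ᵀ *ᵥ ((Dt i) *ᵥ
              ((1 - π i) *ᵥ ((Rt i) *ᵥ U))))))) ⬝ᵥ
          ((R i)ᵀ *ᵥ ((R i) *ᵥ ((Rt i)ᵀ *ᵥ ((Dt i) *ᵥ ((1 - π i) *ᵥ ((Rt i) *ᵥ U))))))
        ≤ τ * k₁t * ((A *ᵥ U) ⬝ᵥ U) := by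

  intro U
  have key : ∀ i : Fin N, (R i)ᵀ *ᵥ ((R i) *ᵥ ((Rt i)ᵀ *ᵥ ((Dt i) *ᵥ
      ((1 - π i) *ᵥ ((Rt i) *ᵥ U))))) = (Rt i)ᵀ *ᵥ ((Dt i) *ᵥ ((1 - π i) *ᵥ ((Rt i) *ᵥ U))) := by
    intro i
    have := congrArg (fun M => M *ᵥ ((1 - π i) *ᵥ ((Rt i) *ᵥ U))) (hcompat i)
    simpa [Matrix.mulVec_mulVec, Matrix.mul_assoc] using this
  calc ∑ i, (A *ᵥ ((R i)ᵀ *ᵥ ((R i) *ᵥ ((Rt i)ᵀ *ᵥ ((Dt i) *ᵥ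
              ((1 - π i) *ᵥ ((Rt i) *ᵥ U))))))) ⬝ᵥ
          ((R i)ᵀ *ᵥ ((R i) *ᵥ ((Rt i)ᵀ *ᵥ ((Dt i) *ᵥ ((1 - π i) *ᵥ ((Rt i) *ᵥ U))))))
      ≤ ∑ i, τ * (((ANeu i) *ᵥ ((Rt i) *ᵥ U)) ⬝ᵥ ((Rt i) *ᵥ U)) := by
        refine Finset.sum_le_sum fun i _ => ?_
        rw [key i]
        exact hπ i ((Rt i) *ᵥ U)
    _ = τ * ∑ i, ((ANeu i) *ᵥ ((Rt i) *ᵥ U)) ⬝ᵥ ((Rt i) *ᵥ U) := (Finset.mul_sum _ _ _).symm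
    _ ≤ τ * (k₁t * ((A *ᵥ U) ⬝ᵥ U)) := by
        exact mul_le_mul_of_nonneg_left (hNeuSum U) hτ.le
    _ = τ * k₁t * ((A *ᵥ U) ⬝ᵥ U) := by ring
end
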